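/- arXiv:0908.3625 — 3 statements merged into one kernel-verified Lean document; each statement's English description precedes it below -/
import Mathlib

section
/- Let B be a constant real symmetric 3×3 matrix with trace 0, and let A : ℝ → M₃(ℝ) be a differentiable family of real symmetric 3×3 matrices with trace 0 such that A(t)B = B A(t) for every t. Then the fields v(t,(x,y,z)) = A(t)(x,y,z)ᵀ and H(t,(x,y,z)) = B(x,y,z)ᵀ, together with the pressure p(t,(x,y,z)) = −(ρ/2)⟨(x,y,z), (A′(t)+A(t)²)(x,y,z)⟩, solve the MHD equations on ℝ × ℝ³. (This is Proposition 2.1; for symmetric traceless A, B the commutation condition is exactly the paper's linear system (2.10) on the entries of A.) -/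
open Real Matrix

/-- Partial derivative in the `i`-th spatial coordinate. -/
noncomputable def pd (i : Fin 3) (f : (Fin 3 → ℝ) → ℝ) (x : Fin 3 → ℝ) : ℝ :=
  deriv (fun s => f (Function.update x i s)) (x i)

/-- Divergence of a vector field on `ℝ³`. -/
noncomputable def vdiv (F : (Fin 3 → ℝ) → (Fin 3 → ℝ)) (x : Fin 3 → ℝ) : ℝ :=
  ∑ i, pd i (fun y => F y i) x

/-- Curl of a vector field on `ℝ³`. -/
noncomputable def vcurl (F : (Fin 3 → ℝ) → (Fin 3 → ℝ)) (x : Fin 3 → ℝ) : Fin 3 → ℝ :=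
  ![pd 1 (fun y => F y 2) x - pd 2 (fun y => F y 1) x,
    pd 2 (fun y => F y 0) x - pd 0 (fun y => F y 2) x,
    pd 0 (fun y => F y 1) x - pd 1 (fun y => F y 0) x]

/-- Laplacian of a scalar field on `ℝ³`. -/
noncomputable def slap (f : (Fin 3 → ℝ) → ℝ) (x : Fin 3 → ℝ) : ℝ :=
  ∑ i, pd i (fun y => pd i f y) x

/-- Cross product on `ℝ³`. -/
def cross3 (u v : Fin 3 → ℝ) : Fin 3 → ℝ :=
  ![u 1 * v 2 - u 2 * v 1, u 2 * v 0 - u 0 * v 2, u 0 * v 1 - u 1 * v 0]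

/-- The incompressible viscous MHD equations with finite electrical conductivity:
(M1) `∇·v = 0`, (M2) momentum, (M3) `∇·H = 0`, (M4) induction. -/
def MHD (ρ ν μ₀ η : ℝ) (v H : ℝ → (Fin 3 → ℝ) → (Fin 3 → ℝ))
    (p : ℝ → (Fin 3 → ℝ) → ℝ) : Prop :=
  ∀ (t : ℝ) (x : Fin 3 → ℝ),
    vdiv (v t) x = 0 ∧
    (∀ i, deriv (fun s => v s x i) t
        + (∑ j, v t x j * pd j (fun y => v t y i) x)
        - μ₀ * cross3 (H t x) (vcurl (H t) x) i
        + (1 / ρ) * pd i (p t) x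
        = ν * slap (fun y => v t y i) x) ∧
    vdiv (H t) x = 0 ∧
    (∀ i, deriv (fun s => H s x i) t
        = vcurl (fun y => cross3 (v t y) (H t y)) x i
          + η * slap (fun y => H t y i) x)

lemma hdUpd (x : Fin 3 → ℝ) (i j : Fin 3) :
    HasDerivAt (fun s => Function.update x i s j) (if j = i then 1 else 0) (x i) := by
  simp only [Function.update_apply]
  split_ifs with h
  · exact hasDerivAt_id _
  · exact hasDerivAt_const _ _

lemma hasDerivAt_mulVec_update (M : Matrix (Fin 3) (Fin 3) ℝ) (x : Fin 3 → ℝ) (i j : Fin 3) :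
    HasDerivAt (fun s => M.mulVec (Function.update x i s) j) (M j i) (x i) := by
  simp only [Matrix.mulVec, dotProduct]
  have := HasDerivAt.fun_sum (fun (k : Fin 3) (_ : k ∈ Finset.univ) =>
    ((hdUpd x i k).const_mul (M j k)))
  simpa [mul_ite, Finset.sum_ite_eq, Finset.sum_ite_eq'] using this

lemma pd_mulVec (M : Matrix (Fin 3) (Fin 3) ℝ) (j i : Fin 3) (x : Fin 3 → ℝ) :
    pd i (fun y => M.mulVec y j) x = M j i :=
  (hasDerivAt_mulVec_update M x i j).deriv

lemma pd_const (c : ℝ) (i : Fin 3) (x : Fin 3 → ℝ) : pd i (fun _ => c) x = 0 := by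
  simp [pd]

lemma pd_mulVec_mul (M N : Matrix (Fin 3) (Fin 3) ℝ) (a b i : Fin 3) (x : Fin 3 → ℝ) :
    pd i (fun y => M.mulVec y a * N.mulVec y b) x
      = M a i * N.mulVec x b + M.mulVec x a * N b i := by
  have h := ((hasDerivAt_mulVec_update M x i a).fun_mul (hasDerivAt_mulVec_update N x i b)).deriv
  simpa [pd, Function.update_eq_self] using h

lemma pd_mulVec_mul_sub (M N : Matrix (Fin 3) (Fin 3) ℝ) (a b c d i : Fin 3) (x : Fin 3 → ℝ) :
    pd i (fun y => M.mulVec y a * N.mulVec y b - M.mulVec y c * N.mulVec y d) x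
      = (M a i * N.mulVec x b + M.mulVec x a * N b i)
        - (M c i * N.mulVec x d + M.mulVec x c * N d i) := by
  have h := (((hasDerivAt_mulVec_update M x i a).fun_mul (hasDerivAt_mulVec_update N x i b)).fun_sub
    ((hasDerivAt_mulVec_update M x i c).fun_mul (hasDerivAt_mulVec_update N x i d))).deriv
  simpa [pd, Function.update_eq_self] using h

lemma pd_dot (M : Matrix (Fin 3) (Fin 3) ℝ) (i : Fin 3) (x : Fin 3 → ℝ) (c : ℝ) :
    pd i (fun y => c * (y ⬝ᵥ M.mulVec y)) x
      = c * (M.mulVec x i + Mᵀ.mulVec x i) := by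
  have h : HasDerivAt (fun s => (Function.update x i s) ⬝ᵥ M.mulVec (Function.update x i s))
      (M.mulVec x i + Mᵀ.mulVec x i) (x i) := by
    simp only [dotProduct]
    have := HasDerivAt.fun_sum (fun (k : Fin 3) (_ : k ∈ Finset.univ) =>
      ((hdUpd x i k).fun_mul (hasDerivAt_mulVec_update M x i k)))
    have e : (∑ k, ((if k = i then (1:ℝ) else 0) * M.mulVec (Function.update x i (x i)) k
        + Function.update x i (x i) k * M k i)) = M.mulVec x i + Mᵀ.mulVec x i := by
      simp [Function.update_eq_self, Finset.sum_add_distrib, ite_mul, Finset.sum_ite_eq,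
        Finset.sum_ite_eq', Matrix.mulVec, dotProduct, Matrix.transpose_apply,
        mul_comm]
    rw [e] at this
    exact this
  simpa [pd] using (h.const_mul c).deriv

/-- Proposition 2.1: linear solutions with `A(t)` symmetric traceless commuting with the
constant symmetric traceless matrix `B`. -/
theorem stmt_0 (ρ ν μ₀ η : ℝ) (hρ : 0 < ρ)
    (B : Matrix (Fin 3) (Fin 3) ℝ) (hBsymm : Bᵀ = B) (hBtr : B.trace = 0)
    (A A' : ℝ → Matrix (Fin 3) (Fin 3) ℝ)
    (hAsymm : ∀ t, (A t)ᵀ = A t) (hAtr : ∀ t, (A t).trace = 0)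
    (hcomm : ∀ t, A t * B = B * A t)
    (hA : ∀ i j t, HasDerivAt (fun s => A s i j) (A' t i j) t) :
    MHD ρ ν μ₀ η (fun t x => (A t).mulVec x) (fun _ x => B.mulVec x)
      (fun t x => -(ρ / 2) * (x ⬝ᵥ (A' t + A t * A t).mulVec x)) := by
  intro t x
  have hb : ∀ a b, B a b = B b a := fun a b => by
    simpa using (congrFun (congrFun hBsymm a) b).symm
  have ha : ∀ s a b, A s a b = A s b a := fun s a b => by
    simpa using (congrFun (congrFun (hAsymm s) a) b).symm
  -- symmetry of A'
  have ha' : ∀ a b, A' t a b = A' t b a := by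
    intro a b
    have h1 : (fun s => A s b a) = fun s => A s a b := funext fun s => (ha s a b).symm
    have h2 : HasDerivAt (fun s => A s a b) (A' t b a) t := h1 ▸ hA b a t
    exact ((hA a b t).unique h2).symm ▸ rfl
  -- time derivative of v
  have hdv : ∀ i, deriv (fun s => (A s).mulVec x i) t = (A' t).mulVec x i := by
    intro i
    have : HasDerivAt (fun s => (A s).mulVec x i) ((A' t).mulVec x i) t := by
      simp only [Matrix.mulVec, dotProduct]
      exact HasDerivAt.fun_sum (fun (k : Fin 3) _ => (hA i k t).mul_const (x k))
    exact this.deriv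
  have hlap : ∀ (M : Matrix (Fin 3) (Fin 3) ℝ) i, slap (fun y => M.mulVec y i) x = 0 := by
    intro M i
    simp [slap, pd_mulVec, pd_const]
  have htrA : A t 0 0 + A t 1 1 + A t 2 2 = 0 := by
    simpa [Matrix.trace, Matrix.diag, Fin.sum_univ_three] using hAtr t
  have htrB : B 0 0 + B 1 1 + B 2 2 = 0 := by
    simpa [Matrix.trace, Matrix.diag, Fin.sum_univ_three] using hBtr
  have hc : ∀ a b : Fin 3,
      A t a 0 * B 0 b + A t a 1 * B 1 b + A t a 2 * B 2 b
        = B a 0 * A t 0 b + B a 1 * A t 1 b + B a 2 * A t 2 b := by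
    intro a b
    have := congrFun (congrFun (hcomm t) a) b
    simpa [Matrix.mul_apply, Fin.sum_univ_three] using this
  refine ⟨?_, ?_, ?_, ?_⟩
  · -- div v = 0
    simpa [vdiv, pd_mulVec, Matrix.trace, Matrix.diag] using hAtr t
  · -- momentum
    intro i
    have hcurlB : vcurl (fun y => B.mulVec y) x = fun _ => 0 := by
      funext j
      fin_cases j <;> simp [vcurl, pd_mulVec] <;> first | linear_combination hb 2 1 | linear_combination hb 0 2 | linear_combination hb 1 0
    have hsymM : ((A' t + A t * A t)ᵀ : Matrix (Fin 3) (Fin 3) ℝ) = A' t + A t * A t := by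
      have h1 : (A' t)ᵀ = A' t := by
        ext a b; simpa [Matrix.transpose_apply] using (ha' b a)
      have h2 : (A t * A t)ᵀ = A t * A t := by
        rw [Matrix.transpose_mul, hAsymm]
      rw [Matrix.transpose_add, h1, h2]
    rw [hdv i, hlap, hcurlB]
    have hcz : cross3 (B.mulVec x) (fun _ => (0:ℝ)) i = 0 := by
      fin_cases i <;> simp [cross3]
    rw [hcz]
    have hpd := pd_dot (A' t + A t * A t) i x (-(ρ/2))
    rw [hsymM] at hpd
    simp only [pd_mulVec]
    rw [hpd]
    have hρ' : ρ ≠ 0 := ne_of_gt hρ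
    have hq : (∑ j, (A t).mulVec x j * A t i j) = (A t * A t).mulVec x i := by
      rw [← Matrix.mulVec_mulVec]
      simp [Matrix.mulVec, dotProduct, Fin.sum_univ_three]
      ring
    rw [hq]
    simp [Matrix.add_mulVec]
    field_simp
    ring
  · -- div H = 0
    simpa [vdiv, pd_mulVec, Matrix.trace, Matrix.diag] using hBtr
  · -- induction
    intro i
    rw [hlap]
    have hd0 : deriv (fun _ : ℝ => B.mulVec x i) t = 0 := by simp
    rw [hd0]
    have hkey : vcurl (fun y => cross3 ((A t).mulVec y) (B.mulVec y)) x i = 0 := by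
      fin_cases i
      · simp only [Fin.zero_eta, vcurl, cross3, Matrix.cons_val_zero,
          Matrix.cons_val_one, Matrix.head_cons, Matrix.cons_val_two, Matrix.tail_cons]
        rw [pd_mulVec_mul_sub, pd_mulVec_mul_sub]
        simp only [Matrix.mulVec, dotProduct, Fin.sum_univ_three]
        linear_combination x 0 * hc 0 0 + x 1 * hc 0 1 + x 2 * hc 0 2
          + (A t 0 0 * x 0 + A t 0 1 * x 1 + A t 0 2 * x 2) * htrB
          - (B 0 0 * x 0 + B 0 1 * x 1 + B 0 2 * x 2) * htrA
      · simp only [Fin.mk_one, vcurl, cross3, Matrix.cons_val_zero,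
          Matrix.cons_val_one, Matrix.head_cons, Matrix.cons_val_two, Matrix.tail_cons]
        rw [pd_mulVec_mul_sub, pd_mulVec_mul_sub]
        simp only [Matrix.mulVec, dotProduct, Fin.sum_univ_three]
        linear_combination x 0 * hc 1 0 + x 1 * hc 1 1 + x 2 * hc 1 2
          + (A t 1 0 * x 0 + A t 1 1 * x 1 + A t 1 2 * x 2) * htrB
          - (B 1 0 * x 0 + B 1 1 * x 1 + B 1 2 * x 2) * htrA
      · simp only [Fin.reduceFinMk, vcurl, cross3, Matrix.cons_val_zero,
          Matrix.cons_val_one, Matrix.head_cons, Matrix.cons_val_two, Matrix.tail_cons]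
        rw [pd_mulVec_mul_sub, pd_mulVec_mul_sub]
        simp only [Matrix.mulVec, dotProduct, Fin.sum_univ_three]
        linear_combination x 0 * hc 2 0 + x 1 * hc 2 1 + x 2 * hc 2 2
          + (A t 2 0 * x 0 + A t 2 1 * x 1 + A t 2 2 * x 2) * htrB
          - (B 2 0 * x 0 + B 2 1 * x 1 + B 2 2 * x 2) * htrA
    rw [hkey]
    ring
end

section
/- Let h, β : ℝ → ℝ be differentiable and a, b, c, s ∈ ℝ. Fix an antiderivative P of β − a h and set q(t) = e^{2P(t)} ( (2a−b) s ∫₀ᵗ e^{−2P(τ)} dτ + c ), so that q′ = 2(β − ah)q + (2a−b)s. Then the fields u = a s y z + (β − a h)x, v = −β y, w = a h z, H¹ = a q(t) y z + (b/2 − a)x, H² = −(b/2) y, H³ = a z, together with the pressure p = −ρ[ (β′ − a h′ + (β − a h)²) x²/2 + (β² − β′) y²/2 + (a/2)(h′ + a h²) z² − μ₀ a² q² y² z² / 2 − μ₀ a q (b/2 − a) x y z ], solve the MHD equations on ℝ × ℝ³. (Theorem 3.1.) -/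
open Real Matrix

section helpers

@[local simp] lemma upd01 (x : Fin 3 → ℝ) (s : ℝ) : Function.update x 0 s 1 = x 1 := Function.update_of_ne (by decide) _ _
@[local simp] lemma upd02 (x : Fin 3 → ℝ) (s : ℝ) : Function.update x 0 s 2 = x 2 := Function.update_of_ne (by decide) _ _
@[local simp] lemma upd10 (x : Fin 3 → ℝ) (s : ℝ) : Function.update x 1 s 0 = x 0 := Function.update_of_ne (by decide) _ _
@[local simp] lemma upd12 (x : Fin 3 → ℝ) (s : ℝ) : Function.update x 1 s 2 = x 2 := Function.update_of_ne (by decide) _ _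
@[local simp] lemma upd20 (x : Fin 3 → ℝ) (s : ℝ) : Function.update x 2 s 0 = x 0 := Function.update_of_ne (by decide) _ _
@[local simp] lemma upd21 (x : Fin 3 → ℝ) (s : ℝ) : Function.update x 2 s 1 = x 1 := Function.update_of_ne (by decide) _ _

lemma pd_eq (f : (Fin 3 → ℝ) → ℝ) (i : Fin 3) (x : Fin 3 → ℝ) (A B C : ℝ)
    (hf : ∀ s, f (Function.update x i s) = A*s^2 + B*s + C) :
    pd i f x = 2*A*(x i) + B := by
  have hg : HasDerivAt (fun s : ℝ => A*s^2+B*s+C) (2*A*(x i)+B) (x i) := by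
    have h1 : HasDerivAt (fun s : ℝ => s^2) (2*(x i)) (x i) := by
      simpa using hasDerivAt_pow 2 (x i)
    have := ((h1.const_mul A).add ((hasDerivAt_id (x i)).const_mul B)).add_const C
    exact this.congr_deriv (by ring)
  unfold pd
  rw [funext hf]
  exact hg.deriv

lemma pd_eq' (f : (Fin 3 → ℝ) → ℝ) (i : Fin 3) (x : Fin 3 → ℝ) (D : ℝ) (A B C : ℝ)
    (hf : ∀ s, f (Function.update x i s) = A*s^2 + B*s + C)
    (hD : 2*A*(x i) + B = D) :
    pd i f x = D := by rw [pd_eq f i x A B C hf]; exact hD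

@[local simp] lemma finmk0 (hp : 0 < 3) : (⟨0, hp⟩ : Fin 3) = 0 := rfl
@[local simp] lemma finmk1 (hp : 1 < 3) : (⟨1, hp⟩ : Fin 3) = 1 := rfl
@[local simp] lemma finmk2 (hp : 2 < 3) : (⟨2, hp⟩ : Fin 3) = 2 := rfl

end helpers


/-- Theorem 3.1 of the paper. -/
theorem stmt_4 (ρ ν μ₀ η : ℝ) (hρ : 0 < ρ) (a b c s : ℝ)
    (h h' β β' : ℝ → ℝ)
    (hh : ∀ t, HasDerivAt h (h' t) t) (hβ : ∀ t, HasDerivAt β (β' t) t)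
    (P : ℝ → ℝ) (hP : ∀ t, HasDerivAt P (β t - a * h t) t)
    (q : ℝ → ℝ)
    (hq : ∀ t, q t = Real.exp (2 * P t) *
      ((2 * a - b) * s * (∫ τ in (0:ℝ)..t, Real.exp (-2 * P τ)) + c)) :
    MHD ρ ν μ₀ η
      (fun t x => ![a * s * x 1 * x 2 + (β t - a * h t) * x 0,
        -(β t) * x 1, a * h t * x 2])
      (fun t x => ![a * q t * x 1 * x 2 + (b / 2 - a) * x 0,
        -(b / 2) * x 1, a * x 2])
      (fun t x => -ρ * ((β' t - a * h' t + (β t - a * h t) ^ 2) * (x 0) ^ 2 / 2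
        + ((β t) ^ 2 - β' t) * (x 1) ^ 2 / 2
        + (a / 2) * (h' t + a * (h t) ^ 2) * (x 2) ^ 2
        - μ₀ * a ^ 2 * (q t) ^ 2 * (x 1) ^ 2 * (x 2) ^ 2 / 2
        - μ₀ * a * q t * (b / 2 - a) * x 0 * x 1 * x 2)) := by
  -- derivative of q
  have hqd : ∀ t, HasDerivAt q (2*(β t - a*h t)*q t + (2*a - b)*s) t := by
    intro t
    have hPc : Continuous P := (Differentiable.continuous fun u => (hP u).differentiableAt)
    have hcont : Continuous fun τ => Real.exp (-2 * P τ) :=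
      Real.continuous_exp.comp (continuous_const.mul hPc)
    have hI : HasDerivAt (fun u => ∫ τ in (0:ℝ)..u, Real.exp (-2 * P τ))
        (Real.exp (-2 * P t)) t := (hcont.integral_hasStrictDerivAt 0 t).hasDerivAt
    have hE : HasDerivAt (fun u => Real.exp (2 * P u))
        (Real.exp (2 * P t) * (2 * (β t - a * h t))) t := by
      simpa [mul_comm] using ((hP t).const_mul 2).exp
    have hIn : HasDerivAt (fun u => (2*a-b)*s*(∫ τ in (0:ℝ)..u, Real.exp (-2 * P τ)) + c)
        ((2*a-b)*s*Real.exp (-2 * P t)) t := (hI.const_mul ((2*a-b)*s)).add_const c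
    have key := hE.mul hIn
    have hfun : q = fun u => Real.exp (2 * P u) *
        ((2 * a - b) * s * (∫ τ in (0:ℝ)..u, Real.exp (-2 * P τ)) + c) := funext hq
    rw [hfun]
    have hee : Real.exp (2 * P t) * Real.exp (-2 * P t) = 1 := by
      rw [← Real.exp_add]; ring_nf; exact Real.exp_zero
    exact key.congr_deriv (by linear_combination (2*a-b)*s*hee)
  intro t x

  -- pd facts for v components
  have hv00 : pd 0 (fun y => a * s * y 1 * y 2 + (β t - a * h t) * y 0) x = β t - a * h t :=
    pd_eq' _ _ _ _ 0 (β t - a * h t) (a*s*x 1*x 2) (fun u => by simp; try ring) (by ring)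
  have hv01 : pd 1 (fun y => a * s * y 1 * y 2 + (β t - a * h t) * y 0) x = a * s * x 2 :=
    pd_eq' _ _ _ _ 0 (a*s*x 2) ((β t - a * h t)*x 0) (fun u => by simp; try ring) (by ring)
  have hv02 : pd 2 (fun y => a * s * y 1 * y 2 + (β t - a * h t) * y 0) x = a * s * x 1 :=
    pd_eq' _ _ _ _ 0 (a*s*x 1) ((β t - a * h t)*x 0) (fun u => by simp; try ring) (by ring)
  have hv10 : pd 0 (fun y => -β t * y 1) x = 0 :=
    pd_eq' _ _ _ _ 0 0 (-β t * x 1) (fun u => by simp; try ring) (by ring)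
  have hv11 : pd 1 (fun y => -β t * y 1) x = -β t :=
    pd_eq' _ _ _ _ 0 (-β t) 0 (fun u => by simp; try ring) (by ring)
  have hv12 : pd 2 (fun y => -β t * y 1) x = 0 :=
    pd_eq' _ _ _ _ 0 0 (-β t * x 1) (fun u => by simp; try ring) (by ring)
  have hv20 : pd 0 (fun y => a * h t * y 2) x = 0 :=
    pd_eq' _ _ _ _ 0 0 (a * h t * x 2) (fun u => by simp; try ring) (by ring)
  have hv21 : pd 1 (fun y => a * h t * y 2) x = 0 :=
    pd_eq' _ _ _ _ 0 0 (a * h t * x 2) (fun u => by simp; try ring) (by ring)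
  have hv22 : pd 2 (fun y => a * h t * y 2) x = a * h t :=
    pd_eq' _ _ _ _ 0 (a * h t) 0 (fun u => by simp; try ring) (by ring)
  -- pd facts for H components
  have hH00 : pd 0 (fun y => a * q t * y 1 * y 2 + (b / 2 - a) * y 0) x = b / 2 - a :=
    pd_eq' _ _ _ _ 0 (b/2 - a) (a*q t*x 1*x 2) (fun u => by simp; try ring) (by ring)
  have hH10 : pd 1 (fun y => a * q t * y 1 * y 2 + (b / 2 - a) * y 0) x = a * q t * x 2 :=
    pd_eq' _ _ _ _ 0 (a*q t*x 2) ((b/2 - a)*x 0) (fun u => by simp; try ring) (by ring)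
  have hH20 : pd 2 (fun y => a * q t * y 1 * y 2 + (b / 2 - a) * y 0) x = a * q t * x 1 :=
    pd_eq' _ _ _ _ 0 (a*q t*x 1) ((b/2 - a)*x 0) (fun u => by simp; try ring) (by ring)
  have hH01 : pd 0 (fun y => -(b / 2) * y 1) x = 0 :=
    pd_eq' _ _ _ _ 0 0 (-(b/2) * x 1) (fun u => by simp; try ring) (by ring)
  have hH11 : pd 1 (fun y => -(b / 2) * y 1) x = -(b/2) :=
    pd_eq' _ _ _ _ 0 (-(b/2)) 0 (fun u => by simp; try ring) (by ring)
  have hH21 : pd 2 (fun y => -(b / 2) * y 1) x = 0 :=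
    pd_eq' _ _ _ _ 0 0 (-(b/2) * x 1) (fun u => by simp; try ring) (by ring)
  have hH02 : pd 0 (fun y => a * y 2) x = 0 :=
    pd_eq' _ _ _ _ 0 0 (a * x 2) (fun u => by simp; try ring) (by ring)
  have hH12 : pd 1 (fun y => a * y 2) x = 0 :=
    pd_eq' _ _ _ _ 0 0 (a * x 2) (fun u => by simp; try ring) (by ring)
  have hH22 : pd 2 (fun y => a * y 2) x = a :=
    pd_eq' _ _ _ _ 0 a 0 (fun u => by simp; try ring) (by ring)
  -- pd facts for the pressure
  have hp0 : pd 0 (fun y =>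
      -ρ * ((β' t - a * h' t + (β t - a * h t) ^ 2) * y 0 ^ 2 / 2 + (β t ^ 2 - β' t) * y 1 ^ 2 / 2 +
          a / 2 * (h' t + a * h t ^ 2) * y 2 ^ 2 -
          μ₀ * a ^ 2 * q t ^ 2 * y 1 ^ 2 * y 2 ^ 2 / 2 -
          μ₀ * a * q t * (b / 2 - a) * y 0 * y 1 * y 2)) x
      = -ρ * ((β' t - a * h' t + (β t - a * h t) ^ 2) * x 0 - μ₀ * a * q t * (b / 2 - a) * x 1 * x 2) :=
    pd_eq' _ _ _ _ (-ρ * (β' t - a * h' t + (β t - a * h t) ^ 2) / 2)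
      (ρ * (μ₀ * a * q t * (b / 2 - a) * x 1 * x 2))
      (-ρ * ((β t ^ 2 - β' t) * x 1 ^ 2 / 2 + a / 2 * (h' t + a * h t ^ 2) * x 2 ^ 2 -
        μ₀ * a ^ 2 * q t ^ 2 * x 1 ^ 2 * x 2 ^ 2 / 2))
      (fun u => by simp; try ring) (by ring)
  have hp1 : pd 1 (fun y =>
      -ρ * ((β' t - a * h' t + (β t - a * h t) ^ 2) * y 0 ^ 2 / 2 + (β t ^ 2 - β' t) * y 1 ^ 2 / 2 +
          a / 2 * (h' t + a * h t ^ 2) * y 2 ^ 2 -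
          μ₀ * a ^ 2 * q t ^ 2 * y 1 ^ 2 * y 2 ^ 2 / 2 -
          μ₀ * a * q t * (b / 2 - a) * y 0 * y 1 * y 2)) x
      = -ρ * ((β t ^ 2 - β' t) * x 1 - μ₀ * a ^ 2 * q t ^ 2 * x 1 * x 2 ^ 2
          - μ₀ * a * q t * (b / 2 - a) * x 0 * x 2) :=
    pd_eq' _ _ _ _ (-ρ * ((β t ^ 2 - β' t) / 2 - μ₀ * a ^ 2 * q t ^ 2 * x 2 ^ 2 / 2))
      (ρ * (μ₀ * a * q t * (b / 2 - a) * x 0 * x 2))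
      (-ρ * ((β' t - a * h' t + (β t - a * h t) ^ 2) * x 0 ^ 2 / 2 +
        a / 2 * (h' t + a * h t ^ 2) * x 2 ^ 2))
      (fun u => by simp; try ring) (by ring)
  have hp2 : pd 2 (fun y =>
      -ρ * ((β' t - a * h' t + (β t - a * h t) ^ 2) * y 0 ^ 2 / 2 + (β t ^ 2 - β' t) * y 1 ^ 2 / 2 +
          a / 2 * (h' t + a * h t ^ 2) * y 2 ^ 2 -
          μ₀ * a ^ 2 * q t ^ 2 * y 1 ^ 2 * y 2 ^ 2 / 2 -
          μ₀ * a * q t * (b / 2 - a) * y 0 * y 1 * y 2)) x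
      = -ρ * (a * (h' t + a * h t ^ 2) * x 2 - μ₀ * a ^ 2 * q t ^ 2 * x 1 ^ 2 * x 2
          - μ₀ * a * q t * (b / 2 - a) * x 0 * x 1) :=
    pd_eq' _ _ _ _ (-ρ * (a / 2 * (h' t + a * h t ^ 2) - μ₀ * a ^ 2 * q t ^ 2 * x 1 ^ 2 / 2))
      (ρ * (μ₀ * a * q t * (b / 2 - a) * x 0 * x 1))
      (-ρ * ((β' t - a * h' t + (β t - a * h t) ^ 2) * x 0 ^ 2 / 2 +
        (β t ^ 2 - β' t) * x 1 ^ 2 / 2))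
      (fun u => by simp; try ring) (by ring)
  -- laplacians vanish
  have sv0 : slap (fun y => a * s * y 1 * y 2 + (β t - a * h t) * y 0) x = 0 := by
    unfold slap
    rw [Fin.sum_univ_three]
    have e0 : (fun y => pd 0 (fun y => a * s * y 1 * y 2 + (β t - a * h t) * y 0) y)
        = (fun _ => β t - a * h t) := funext fun y =>
      pd_eq' _ _ _ _ 0 (β t - a * h t) (a*s*y 1*y 2) (fun u => by simp; try ring) (by ring)
    have e1 : (fun y => pd 1 (fun y => a * s * y 1 * y 2 + (β t - a * h t) * y 0) y)
        = (fun y => a * s * y 2) := funext fun y =>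
      pd_eq' _ _ _ _ 0 (a*s*y 2) ((β t - a * h t)*y 0) (fun u => by simp; try ring) (by ring)
    have e2 : (fun y => pd 2 (fun y => a * s * y 1 * y 2 + (β t - a * h t) * y 0) y)
        = (fun y => a * s * y 1) := funext fun y =>
      pd_eq' _ _ _ _ 0 (a*s*y 1) ((β t - a * h t)*y 0) (fun u => by simp; try ring) (by ring)
    rw [e0, e1, e2,
      pd_eq' (fun _ => β t - a * h t) 0 x 0 0 0 (β t - a * h t) (fun u => by simp; try ring) (by ring),
      pd_eq' (fun y => a * s * y 2) 1 x 0 0 0 (a * s * x 2) (fun u => by simp; try ring) (by ring),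
      pd_eq' (fun y => a * s * y 1) 2 x 0 0 0 (a * s * x 1) (fun u => by simp; try ring) (by ring)]
    ring
  have sv1 : slap (fun y => -β t * y 1) x = 0 := by
    unfold slap
    rw [Fin.sum_univ_three]
    have e0 : (fun y => pd 0 (fun y => -β t * y 1) y) = (fun y => (0:ℝ)) := funext fun y =>
      pd_eq' _ _ _ _ 0 0 (-β t * y 1) (fun u => by simp; try ring) (by ring)
    have e1 : (fun y => pd 1 (fun y => -β t * y 1) y) = (fun y => -β t) := funext fun y =>
      pd_eq' _ _ _ _ 0 (-β t) 0 (fun u => by simp; try ring) (by ring)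
    have e2 : (fun y => pd 2 (fun y => -β t * y 1) y) = (fun y => (0:ℝ)) := funext fun y =>
      pd_eq' _ _ _ _ 0 0 (-β t * y 1) (fun u => by simp; try ring) (by ring)
    rw [e0, e1, e2,
      pd_eq' (fun _ => (0:ℝ)) 0 x 0 0 0 0 (fun u => by simp; try ring) (by ring),
      pd_eq' (fun _ => -β t) 1 x 0 0 0 (-β t) (fun u => by simp; try ring) (by ring),
      pd_eq' (fun _ => (0:ℝ)) 2 x 0 0 0 0 (fun u => by simp; try ring) (by ring)]
    ring
  have sv2 : slap (fun y => a * h t * y 2) x = 0 := by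
    unfold slap
    rw [Fin.sum_univ_three]
    have e0 : (fun y => pd 0 (fun y => a * h t * y 2) y) = (fun y => (0:ℝ)) := funext fun y =>
      pd_eq' _ _ _ _ 0 0 (a * h t * y 2) (fun u => by simp; try ring) (by ring)
    have e1 : (fun y => pd 1 (fun y => a * h t * y 2) y) = (fun y => (0:ℝ)) := funext fun y =>
      pd_eq' _ _ _ _ 0 0 (a * h t * y 2) (fun u => by simp; try ring) (by ring)
    have e2 : (fun y => pd 2 (fun y => a * h t * y 2) y) = (fun y => a * h t) := funext fun y =>
      pd_eq' _ _ _ _ 0 (a * h t) 0 (fun u => by simp; try ring) (by ring)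
    rw [e0, e1, e2,
      pd_eq' (fun _ => (0:ℝ)) 0 x 0 0 0 0 (fun u => by simp; try ring) (by ring),
      pd_eq' (fun _ => (0:ℝ)) 1 x 0 0 0 0 (fun u => by simp; try ring) (by ring),
      pd_eq' (fun _ => a * h t) 2 x 0 0 0 (a * h t) (fun u => by simp; try ring) (by ring)]
    ring
  have sH0 : slap (fun y => a * q t * y 1 * y 2 + (b / 2 - a) * y 0) x = 0 := by
    unfold slap
    rw [Fin.sum_univ_three]
    have e0 : (fun y => pd 0 (fun y => a * q t * y 1 * y 2 + (b / 2 - a) * y 0) y)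
        = (fun _ => b / 2 - a) := funext fun y =>
      pd_eq' _ _ _ _ 0 (b / 2 - a) (a*q t*y 1*y 2) (fun u => by simp; try ring) (by ring)
    have e1 : (fun y => pd 1 (fun y => a * q t * y 1 * y 2 + (b / 2 - a) * y 0) y)
        = (fun y => a * q t * y 2) := funext fun y =>
      pd_eq' _ _ _ _ 0 (a*q t*y 2) ((b / 2 - a)*y 0) (fun u => by simp; try ring) (by ring)
    have e2 : (fun y => pd 2 (fun y => a * q t * y 1 * y 2 + (b / 2 - a) * y 0) y)
        = (fun y => a * q t * y 1) := funext fun y =>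
      pd_eq' _ _ _ _ 0 (a*q t*y 1) ((b / 2 - a)*y 0) (fun u => by simp; try ring) (by ring)
    rw [e0, e1, e2,
      pd_eq' (fun _ => b / 2 - a) 0 x 0 0 0 (b / 2 - a) (fun u => by simp; try ring) (by ring),
      pd_eq' (fun y => a * q t * y 2) 1 x 0 0 0 (a * q t * x 2) (fun u => by simp; try ring) (by ring),
      pd_eq' (fun y => a * q t * y 1) 2 x 0 0 0 (a * q t * x 1) (fun u => by simp; try ring) (by ring)]
    ring
  have sH1 : slap (fun y => -(b / 2) * y 1) x = 0 := by
    unfold slap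
    rw [Fin.sum_univ_three]
    have e0 : (fun y => pd 0 (fun y => -(b / 2) * y 1) y) = (fun y => (0:ℝ)) := funext fun y =>
      pd_eq' _ _ _ _ 0 0 (-(b / 2) * y 1) (fun u => by simp; try ring) (by ring)
    have e1 : (fun y => pd 1 (fun y => -(b / 2) * y 1) y) = (fun y => -(b / 2)) := funext fun y =>
      pd_eq' _ _ _ _ 0 (-(b / 2)) 0 (fun u => by simp; try ring) (by ring)
    have e2 : (fun y => pd 2 (fun y => -(b / 2) * y 1) y) = (fun y => (0:ℝ)) := funext fun y =>
      pd_eq' _ _ _ _ 0 0 (-(b / 2) * y 1) (fun u => by simp; try ring) (by ring)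
    rw [e0, e1, e2,
      pd_eq' (fun _ => (0:ℝ)) 0 x 0 0 0 0 (fun u => by simp; try ring) (by ring),
      pd_eq' (fun _ => -(b / 2)) 1 x 0 0 0 (-(b / 2)) (fun u => by simp; try ring) (by ring),
      pd_eq' (fun _ => (0:ℝ)) 2 x 0 0 0 0 (fun u => by simp; try ring) (by ring)]
    ring
  have sH2 : slap (fun y => a * y 2) x = 0 := by
    unfold slap
    rw [Fin.sum_univ_three]
    have e0 : (fun y => pd 0 (fun y => a * y 2) y) = (fun y => (0:ℝ)) := funext fun y =>
      pd_eq' _ _ _ _ 0 0 (a * y 2) (fun u => by simp; try ring) (by ring)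
    have e1 : (fun y => pd 1 (fun y => a * y 2) y) = (fun y => (0:ℝ)) := funext fun y =>
      pd_eq' _ _ _ _ 0 0 (a * y 2) (fun u => by simp; try ring) (by ring)
    have e2 : (fun y => pd 2 (fun y => a * y 2) y) = (fun y => a) := funext fun y =>
      pd_eq' _ _ _ _ 0 a 0 (fun u => by simp; try ring) (by ring)
    rw [e0, e1, e2,
      pd_eq' (fun _ => (0:ℝ)) 0 x 0 0 0 0 (fun u => by simp; try ring) (by ring),
      pd_eq' (fun _ => (0:ℝ)) 1 x 0 0 0 0 (fun u => by simp; try ring) (by ring),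
      pd_eq' (fun _ => a) 2 x 0 0 0 a (fun u => by simp; try ring) (by ring)]
    ring
  -- time derivatives
  have hdv0 : deriv (fun τ => a * s * x 1 * x 2 + (β τ - a * h τ) * x 0) t
      = (β' t - a * h' t) * x 0 :=
    ((((hβ t).sub ((hh t).const_mul a)).mul_const (x 0)).const_add (a * s * x 1 * x 2)).deriv
  have hdv1 : deriv (fun τ => -β τ * x 1) t = -β' t * x 1 := (((hβ t).neg).mul_const (x 1)).deriv
  have hdv2 : deriv (fun τ => a * h τ * x 2) t = a * h' t * x 2 :=
    (((hh t).const_mul a).mul_const (x 2)).deriv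
  have hdH0 : deriv (fun τ => a * q τ * x 1 * x 2 + (b / 2 - a) * x 0) t
      = a * (2 * (β t - a * h t) * q t + (2 * a - b) * s) * x 1 * x 2 :=
    (((((hqd t).const_mul a).mul_const (x 1)).mul_const (x 2)).add_const ((b / 2 - a) * x 0)).deriv
  have hdH1 : deriv (fun _ : ℝ => -(b / 2) * x 1) t = 0 := deriv_const _ _
  have hdH2 : deriv (fun _ : ℝ => a * x 2) t = 0 := deriv_const _ _
  refine ⟨?_, ?_, ?_, ?_⟩
  · -- M1
    unfold vdiv
    rw [Fin.sum_univ_three]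
    simp only [Matrix.cons_val_zero, Matrix.cons_val_one, Matrix.head_cons,
      Matrix.cons_val_two, Matrix.tail_cons]
    rw [hv00, hv11, hv22]
    ring
  · -- M2
    intro i
    fin_cases i
    · simp only [Matrix.cons_val_zero, Matrix.cons_val_one, Matrix.head_cons, Matrix.cons_val_two, Matrix.tail_cons, Fin.sum_univ_three, cross3, vcurl, Fin.isValue, finmk0, finmk1, finmk2]
      rw [hdv0, hv00, hv01, hv02, hH01, hH10, hH20, hH02, hp0, sv0]
      field_simp
      ring
    · simp only [Matrix.cons_val_zero, Matrix.cons_val_one, Matrix.head_cons, Matrix.cons_val_two, Matrix.tail_cons, Fin.sum_univ_three, cross3, vcurl, Fin.isValue, finmk0, finmk1, finmk2]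
      rw [hdv1, hv10, hv11, hv12, hH12, hH21, hH01, hH10, hp1, sv1]
      field_simp
      ring
    · simp only [Matrix.cons_val_zero, Matrix.cons_val_one, Matrix.head_cons, Matrix.cons_val_two, Matrix.tail_cons, Fin.sum_univ_three, cross3, vcurl, Fin.isValue, finmk0, finmk1, finmk2]
      rw [hdv2, hv20, hv21, hv22, hH20, hH02, hH12, hH21, hp2, sv2]
      field_simp
      ring
  · -- M3
    unfold vdiv
    rw [Fin.sum_univ_three]
    simp only [Matrix.cons_val_zero, Matrix.cons_val_one, Matrix.head_cons,
      Matrix.cons_val_two, Matrix.tail_cons]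
    rw [hH00, hH11, hH22]
    ring
  · -- M4
    intro i
    fin_cases i
    · simp only [Matrix.cons_val_zero, Matrix.cons_val_one, Matrix.head_cons, Matrix.cons_val_two, Matrix.tail_cons, Fin.sum_univ_three, cross3, vcurl, Fin.isValue, finmk0, finmk1, finmk2]
      have hG2 : pd 1 (fun y =>
          (a * s * y 1 * y 2 + (β t - a * h t) * y 0) * (-(b / 2) * y 1) -
            -β t * y 1 * (a * q t * y 1 * y 2 + (b / 2 - a) * y 0)) x
          = 2*(β t*(a*q t) - b/2*(a*s))*x 1*x 2 + (β t*(b/2-a) - b/2*(β t - a*h t))*x 0 :=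
        pd_eq' _ _ _ _ (-(b/2)*(a*s)*x 2 + β t*(a*q t)*x 2)
          (-(b/2)*((β t - a*h t)*x 0) + β t*((b/2-a)*x 0)) 0
          (fun u => by simp; try ring) (by ring)
      have hG1 : pd 2 (fun y =>
          a * h t * y 2 * (a * q t * y 1 * y 2 + (b / 2 - a) * y 0) -
            (a * s * y 1 * y 2 + (β t - a * h t) * y 0) * (a * y 2)) x
          = 2*(a*h t*(a*q t) - a*(a*s))*x 1*x 2 + (a*h t*(b/2-a) - a*(β t - a*h t))*x 0 :=
        pd_eq' _ _ _ _ (a*h t*(a*q t)*x 1 - a*s*x 1*a)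
          (a*h t*((b/2-a)*x 0) - (β t - a*h t)*x 0*a) 0
          (fun u => by simp; try ring) (by ring)
      rw [hdH0, hG2, hG1, sH0]
      ring
    · simp only [Matrix.cons_val_zero, Matrix.cons_val_one, Matrix.head_cons, Matrix.cons_val_two, Matrix.tail_cons, Fin.sum_univ_three, cross3, vcurl, Fin.isValue, finmk0, finmk1, finmk2]
      have hG0 : pd 2 (fun y =>
          -β t * y 1 * (a * y 2) - a * h t * y 2 * (-(b / 2) * y 1)) x
          = (a*h t*(b/2) - a*β t)*x 1 :=
        pd_eq' _ _ _ _ 0 (-β t*x 1*a + a*h t*(b/2)*x 1) 0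
          (fun u => by simp; try ring) (by ring)
      have hG2 : pd 0 (fun y =>
          (a * s * y 1 * y 2 + (β t - a * h t) * y 0) * (-(b / 2) * y 1) -
            -β t * y 1 * (a * q t * y 1 * y 2 + (b / 2 - a) * y 0)) x
          = (β t*(b/2-a) - b/2*(β t - a*h t))*x 1 :=
        pd_eq' _ _ _ _ 0 ((β t - a*h t)*(-(b/2))*x 1 + β t*x 1*(b/2-a))
          (a*s*x 1*x 2*(-(b/2))*x 1 + β t*x 1*(a*q t*x 1*x 2))
          (fun u => by simp; try ring) (by ring)
      rw [hdH1, hG0, hG2, sH1]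
      ring
    · simp only [Matrix.cons_val_zero, Matrix.cons_val_one, Matrix.head_cons, Matrix.cons_val_two, Matrix.tail_cons, Fin.sum_univ_three, cross3, vcurl, Fin.isValue, finmk0, finmk1, finmk2]
      have hG1 : pd 0 (fun y =>
          a * h t * y 2 * (a * q t * y 1 * y 2 + (b / 2 - a) * y 0) -
            (a * s * y 1 * y 2 + (β t - a * h t) * y 0) * (a * y 2)) x
          = (a*h t*(b/2-a) - (β t - a*h t)*a)*x 2 :=
        pd_eq' _ _ _ _ 0 (a*h t*x 2*(b/2-a) - (β t - a*h t)*(a*x 2))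
          (a*h t*x 2*(a*q t*x 1*x 2) - a*s*x 1*x 2*(a*x 2))
          (fun u => by simp; try ring) (by ring)
      have hG0 : pd 1 (fun y =>
          -β t * y 1 * (a * y 2) - a * h t * y 2 * (-(b / 2) * y 1)) x
          = (a*h t*(b/2) - a*β t)*x 2 :=
        pd_eq' _ _ _ _ 0 (-β t*(a*x 2) + a*h t*x 2*(b/2)) 0
          (fun u => by simp; try ring) (by ring)
      rw [hdH2, hG1, hG0, sH2]
      ring
end

section
/- Let d > 1 and ε ∈ {1, −1}, let I ⊆ ℝ be an interval, and let α : I → ℝ be twice continuously differentiable with sin α(t) ≠ 0 and d sin²α(t) > 1 for all t ∈ I. Let β : I → ℝ be any function with β′(t) = ε α′(t) / ( sin²α(t) · √( d − 1/sin²α(t) ) ) for all t ∈ I (i.e. β = ±∫ dα/( sin²α √(d − sin⁻²α) ) + d₀). Then β is twice differentiable and for all t ∈ I: α″ β′ sin α − α′ β″ sin α − 2 (α′)² β′ cos α − (β′)³ sin²α cos α = 0. -/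
open Real

set_option maxHeartbeats 1000000 in
/-- The compatibility relation (4.88)–(4.89): when `β' = ε α'/(sin²α √(d - sin⁻²α))`,
`β` is twice differentiable and
`α'' β' sin α - α' β'' sin α - 2 α'² β' cos α - β'³ sin²α cos α = 0`. -/
theorem stmt_13 (d : ℝ) (hd : 1 < d) (ε : ℝ) (hε : ε = 1 ∨ ε = -1)
    (I : Set ℝ)
    (α α' α'' β : ℝ → ℝ)
    (hα : ∀ t ∈ I, HasDerivAt α (α' t) t)
    (hα' : ∀ t ∈ I, HasDerivAt α' (α'' t) t)
    (hα''c : ContinuousOn α'' I)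
    (hsin : ∀ t ∈ I, Real.sin (α t) ≠ 0)
    (hdsin : ∀ t ∈ I, 1 < d * Real.sin (α t) ^ 2)
    (hβ : ∀ t ∈ I, HasDerivAt β
      (ε * α' t / (Real.sin (α t) ^ 2 * Real.sqrt (d - 1 / Real.sin (α t) ^ 2))) t) :
    ∃ β'' : ℝ → ℝ,
      (∀ t ∈ I, HasDerivAt
        (fun s => ε * α' s / (Real.sin (α s) ^ 2 * Real.sqrt (d - 1 / Real.sin (α s) ^ 2)))
        (β'' t) t) ∧
      ∀ t ∈ I,
        α'' t * (ε * α' t / (Real.sin (α t) ^ 2 * Real.sqrt (d - 1 / Real.sin (α t) ^ 2)))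
            * Real.sin (α t)
          - α' t * β'' t * Real.sin (α t)
          - 2 * (α' t) ^ 2
            * (ε * α' t / (Real.sin (α t) ^ 2 * Real.sqrt (d - 1 / Real.sin (α t) ^ 2)))
            * Real.cos (α t)
          - (ε * α' t / (Real.sin (α t) ^ 2 * Real.sqrt (d - 1 / Real.sin (α t) ^ 2))) ^ 3
            * Real.sin (α t) ^ 2 * Real.cos (α t) = 0 := by
  -- notation
  set βf : ℝ → ℝ := fun t =>
    ε * (α'' t * (Real.sin (α t) ^ 2 * Real.sqrt (d - 1 / Real.sin (α t) ^ 2))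
      - α' t * (2 * Real.sin (α t) * Real.cos (α t) * α' t
            * Real.sqrt (d - 1 / Real.sin (α t) ^ 2)
          + Real.cos (α t) * α' t
            / (Real.sin (α t) * Real.sqrt (d - 1 / Real.sin (α t) ^ 2))))
      / (Real.sin (α t) ^ 2 * Real.sqrt (d - 1 / Real.sin (α t) ^ 2)) ^ 2 with hβf
  have key : ∀ t ∈ I,
      (0 : ℝ) < d - 1 / Real.sin (α t) ^ 2 := by
    intro t ht
    have hs := hsin t ht
    have hs2 : (0:ℝ) < Real.sin (α t) ^ 2 := by positivity
    rw [sub_pos, div_lt_iff₀ hs2]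
    linarith [hdsin t ht]
  have hε2 : ε ^ 2 = 1 := by rcases hε with h | h <;> simp [h]
  refine ⟨βf, ?_, ?_⟩
  · intro t ht
    have hs := hsin t ht
    have hw := key t ht
    have hq : Real.sqrt (d - 1 / Real.sin (α t) ^ 2) ≠ 0 :=
      ne_of_gt (Real.sqrt_pos.mpr hw)
    have hs2 : Real.sin (α t) ^ 2 ≠ 0 := pow_ne_zero 2 hs
    have hsd : HasDerivAt (fun x => Real.sin (α x)) (Real.cos (α t) * α' t) t :=
      (hα t ht).sin
    have hsd2 : HasDerivAt (fun x => Real.sin (α x) ^ 2)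
        ((2:ℕ) * Real.sin (α t) ^ (2-1) * (Real.cos (α t) * α' t)) t := hsd.pow 2
    have hinv : HasDerivAt (fun x => (1:ℝ) / Real.sin (α x) ^ 2)
        (-((2:ℕ) * Real.sin (α t) ^ (2-1) * (Real.cos (α t) * α' t))
          / (Real.sin (α t) ^ 2) ^ 2) t := by
      simpa [one_div, Pi.inv_def] using hsd2.inv hs2
    have hwd : HasDerivAt (fun x => d - 1 / Real.sin (α x) ^ 2)
        (0 - -((2:ℕ) * Real.sin (α t) ^ (2-1) * (Real.cos (α t) * α' t))
          / (Real.sin (α t) ^ 2) ^ 2) t :=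
      (hasDerivAt_const t d).sub hinv
    have hqd : HasDerivAt (fun x => Real.sqrt (d - 1 / Real.sin (α x) ^ 2))
        ((0 - -((2:ℕ) * Real.sin (α t) ^ (2-1) * (Real.cos (α t) * α' t))
            / (Real.sin (α t) ^ 2) ^ 2)
          / (2 * Real.sqrt (d - 1 / Real.sin (α t) ^ 2))) t :=
      hwd.sqrt (ne_of_gt hw)
    have hden : HasDerivAt
        (fun x => Real.sin (α x) ^ 2 * Real.sqrt (d - 1 / Real.sin (α x) ^ 2))
        ((2:ℕ) * Real.sin (α t) ^ (2-1) * (Real.cos (α t) * α' t)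
            * Real.sqrt (d - 1 / Real.sin (α t) ^ 2)
          + Real.sin (α t) ^ 2
            * ((0 - -((2:ℕ) * Real.sin (α t) ^ (2-1) * (Real.cos (α t) * α' t))
                / (Real.sin (α t) ^ 2) ^ 2)
              / (2 * Real.sqrt (d - 1 / Real.sin (α t) ^ 2)))) t :=
      hsd2.mul hqd
    have hnum : HasDerivAt (fun x => ε * α' x) (ε * α'' t) t :=
      (hα' t ht).const_mul ε
    have hdenne : Real.sin (α t) ^ 2 * Real.sqrt (d - 1 / Real.sin (α t) ^ 2) ≠ 0 :=
      mul_ne_zero hs2 hq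
    have h : HasDerivAt (fun x => ε * α' x / (Real.sin (α x) ^ 2 * Real.sqrt (d - 1 / Real.sin (α x) ^ 2))) _ t :=
      hnum.div hden hdenne
    convert h using 1
    simp only [hβf]
    have hq2 : Real.sqrt (d - 1 / Real.sin (α t) ^ 2) ^ 2 = d - 1 / Real.sin (α t) ^ 2 :=
      Real.sq_sqrt hw.le
    set s := Real.sin (α t) with hsdef
    set c := Real.cos (α t) with hcdef
    set q := Real.sqrt (d - 1 / s ^ 2) with hqdef
    set A := α' t with hAdef
    set B := α'' t with hBdef
    clear_value s c q A B
    norm_num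
    field_simp
  · intro t ht
    have hs := hsin t ht
    have hw := key t ht
    have hq : Real.sqrt (d - 1 / Real.sin (α t) ^ 2) ≠ 0 :=
      ne_of_gt (Real.sqrt_pos.mpr hw)
    have hq2 : Real.sqrt (d - 1 / Real.sin (α t) ^ 2) ^ 2 = d - 1 / Real.sin (α t) ^ 2 :=
      Real.sq_sqrt hw.le
    simp only [hβf]
    set s := Real.sin (α t) with hsdef
    set c := Real.cos (α t) with hcdef
    set q := Real.sqrt (d - 1 / s ^ 2) with hqdef
    set A := α' t with hAdef
    set B := α'' t with hBdef
    clear_value s c q A B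
    have hs2 : s ^ 2 ≠ 0 := pow_ne_zero 2 hs
    rcases hε with h | h <;> subst h <;> field_simp <;> nlinarith [hq2, sq_nonneg s]
end
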